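/- There exists an absolute constant C > 0 such that for every d ≥ 1, every Boolean function g : {0,1}^d → {0,1}, and every coloring ξ : E({0,1}^d) → {0,1} of the edges of the Boolean hypercube, E_{z ∈ {0,1}^d}[ sqrt(I_{g,ξ}(z)) ] ≥ C · var(g). -/

import Mathlib

open scoped Classical

noncomputable section

/-- The Boolean hypercube `{0,1}^d`. -/
abbrev Cube (d : ℕ) := Fin d → Bool

/-- Colored (undirected) influence of `z` for `g : {0,1}^d → {0,1}`, with respect to an
edge coloring `ξ` of the hypercube (the color of the edge in direction `i` through `z`
is `ξ (z with i-th coordinate set to false) i`, so that the color depends only on the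
edge): the number of sensitive edges incident to `z` whose color equals `g z`. -/
def cubeColInf {d : ℕ} (g : Cube d → Bool) (ξ : Cube d → Fin d → Bool) (z : Cube d) : ℕ :=
  (Finset.univ.filter (fun i : Fin d =>
    g z ≠ g (Function.update z i (!z i)) ∧
      g z = ξ (Function.update z i false) i)).card

/-- The variance of `g`: `Pr[g = 0] · Pr[g = 1]` under the uniform distribution. -/
def varCube {d : ℕ} (g : Cube d → Bool) : ℝ :=
  (((Finset.univ.filter (fun z : Cube d => g z = false)).card : ℝ) / 2 ^ d) *
    (((Finset.univ.filter (fun z : Cube d => g z = true)).card : ℝ) / 2 ^ d)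

namespace ColoredTalagrandAux

/-! ### Restrictions of a function on the `(d+1)`-cube to the two halves -/

def gres {d : ℕ} (g : Cube (d+1) → Bool) (b : Bool) : Cube d → Bool := fun y => g (Fin.cons b y)

def xires {d : ℕ} (ξ : Cube (d+1) → Fin (d+1) → Bool) (b : Bool) : Cube d → Fin d → Bool :=
  fun y j => ξ (Fin.cons b y) j.succ

/-- The contribution at `x` of the cross edge (in direction `0`) to the colored influence
of the point `Fin.cons b x`. -/
def eb {d : ℕ} (g : Cube (d+1) → Bool) (ξ : Cube (d+1) → Fin (d+1) → Bool) (b : Bool)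
    (x : Cube d) : ℕ :=
  if g (Fin.cons b x) ≠ g (Fin.cons (!b) x) ∧ g (Fin.cons b x) = ξ (Fin.cons false x) 0
    then 1 else 0

lemma colInf_cons {d : ℕ} (g : Cube (d+1) → Bool) (ξ : Cube (d+1) → Fin (d+1) → Bool)
    (b : Bool) (x : Cube d) :
    cubeColInf g ξ (Fin.cons b x) = eb g ξ b x + cubeColInf (gres g b) (xires ξ b) x := by
  unfold cubeColInf eb gres xires
  rw [Finset.card_filter, Finset.card_filter, Fin.sum_univ_succ]
  congr 1
  · simp [Fin.cons_zero, Fin.update_cons_zero]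
  · apply Finset.sum_congr rfl
    intro j _
    simp [Fin.cons_succ, ← Fin.cons_update]

lemma sum_cube_succ {d : ℕ} (F : Cube (d+1) → ℝ) :
    ∑ z : Cube (d+1), F z
      = (∑ x : Cube d, F (Fin.cons false x)) + ∑ x : Cube d, F (Fin.cons true x) := by
  rw [← (Fin.consEquiv (fun _ : Fin (d+1) => Bool)).sum_comp F]
  rw [Fintype.sum_prod_type, Fintype.sum_bool]
  simp [Fin.consEquiv, add_comm]

/-! ### Counting -/

def cntR {d : ℕ} (g : Cube d → Bool) (b : Bool) : ℝ :=
  ∑ z : Cube d, if g z = b then (1:ℝ) else 0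

lemma cntR_nonneg {d : ℕ} (g : Cube d → Bool) (b : Bool) : 0 ≤ cntR g b := by
  apply Finset.sum_nonneg
  intro z _
  split <;> norm_num

lemma card_cube (d : ℕ) : ((Fintype.card (Cube d) : ℝ)) = 2 ^ d := by
  rw [Fintype.card_fun]
  simp

lemma cntR_add {d : ℕ} (g : Cube d → Bool) : cntR g false + cntR g true = 2 ^ d := by
  unfold cntR
  rw [← Finset.sum_add_distrib]
  have h : ∀ z : Cube d,
      ((if g z = false then (1:ℝ) else 0) + (if g z = true then (1:ℝ) else 0)) = 1 := by
    intro z; cases h : g z <;> simp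
  rw [Finset.sum_congr rfl (fun z _ => h z)]
  rw [Finset.sum_const, Finset.card_univ, nsmul_eq_mul, mul_one, card_cube]

lemma card_cast {d : ℕ} (g : Cube d → Bool) (b : Bool) :
    ((Finset.univ.filter (fun z : Cube d => g z = b)).card : ℝ) = cntR g b := by
  rw [Finset.card_filter]
  unfold cntR
  push_cast
  rfl

lemma cntR_split {d : ℕ} (g : Cube (d+1) → Bool) (b : Bool) :
    cntR g b = cntR (gres g false) b + cntR (gres g true) b := by
  unfold cntR gres
  exact sum_cube_succ (fun z => if g z = b then (1:ℝ) else 0)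

/-! ### Pointwise facts about the cross-edge contributions -/

lemma eb_zero_or_one {d : ℕ} (g : Cube (d+1) → Bool) (ξ : Cube (d+1) → Fin (d+1) → Bool)
    (b : Bool) (x : Cube d) : ((eb g ξ b x : ℝ)) = 0 ∨ ((eb g ξ b x : ℝ)) = 1 := by
  unfold eb; split <;> simp

lemma eb_add {d : ℕ} (g : Cube (d+1) → Bool) (ξ : Cube (d+1) → Fin (d+1) → Bool) (x : Cube d) :
    (eb g ξ false x : ℝ) + (eb g ξ true x : ℝ)
      = if gres g false x = gres g true x then 0 else 1 := by
  unfold eb gres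
  cases h0 : g (Fin.cons false x) <;> cases h1 : g (Fin.cons true x) <;>
    cases hc : ξ (Fin.cons false x) 0 <;> simp [h0, h1, hc]

lemma ind_diff {d : ℕ} (g : Cube (d+1) → Bool) (ξ : Cube (d+1) → Fin (d+1) → Bool)
    (x : Cube d) :
    |(if gres g false x = true then (1:ℝ) else 0) - (if gres g true x = true then (1:ℝ) else 0)|
      ≤ (eb g ξ false x : ℝ) + (eb g ξ true x : ℝ) := by
  rw [eb_add]
  cases h0 : gres g false x <;> cases h1 : gres g true x <;> simp [h0, h1]

lemma diff_le {d : ℕ} (g : Cube (d+1) → Bool) (ξ : Cube (d+1) → Fin (d+1) → Bool) :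
    |cntR (gres g false) true - cntR (gres g true) true|
      ≤ (∑ x : Cube d, (eb g ξ false x : ℝ)) + ∑ x : Cube d, (eb g ξ true x : ℝ) := by
  unfold cntR
  rw [← Finset.sum_sub_distrib, ← Finset.sum_add_distrib]
  refine le_trans (Finset.abs_sum_le_sum_abs _ _) ?_
  apply Finset.sum_le_sum
  intro x _
  exact ind_diff g ξ x

/-! ### Elementary real analysis lemmas -/

lemma sqrt_add_ind (a e : ℝ) (ha : 0 ≤ a) (he : e = 0 ∨ e = 1) :
    Real.sqrt a + e / (2 * Real.sqrt (a+1)) ≤ Real.sqrt (a + e) := by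
  rcases he with h | h
  · simp [h]
  subst h
  set u := Real.sqrt (a+1) with hu
  set v := Real.sqrt a with hv
  have hu2 : u^2 = a + 1 := Real.sq_sqrt (by linarith)
  have hv2 : v^2 = a := Real.sq_sqrt ha
  have hu0 : 0 < u := by
    rw [hu]; exact Real.sqrt_pos.mpr (by linarith)
  have hv0 : 0 ≤ v := Real.sqrt_nonneg a
  have key : 2*u*v ≤ 2*a + 1 := by nlinarith [sq_nonneg (u - v)]
  have h2 : 1 / (2*u) ≤ u - v := by
    rw [div_le_iff₀ (by linarith)]
    nlinarith
  linarith

lemma sqrt_succ_le (a : ℝ) (ha : 0 ≤ a) : Real.sqrt (a+1) ≤ Real.sqrt a + 1 := by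
  have hu2 : (Real.sqrt (a+1))^2 = a + 1 := Real.sq_sqrt (by linarith)
  have hv2 : (Real.sqrt a)^2 = a := Real.sq_sqrt ha
  nlinarith [Real.sqrt_nonneg a, Real.sqrt_nonneg (a+1)]

lemma cs_aux {ι : Type*} [Fintype ι] (e s : ι → ℝ) (he : ∀ x, e x = 0 ∨ e x = 1)
    (hs : ∀ x, 1 ≤ s x) :
    (∑ x, e x)^2 ≤ (∑ x, e x / s x) * (∑ x, e x * s x) := by
  have h := Finset.sum_mul_sq_le_sq_mul_sq Finset.univ
    (fun x => Real.sqrt (e x / s x)) (fun x => Real.sqrt (e x * s x))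
  have he0 : ∀ x, 0 ≤ e x := fun x => by rcases he x with h|h <;> simp [h]
  have hs0 : ∀ x, 0 < s x := fun x => lt_of_lt_of_le one_pos (hs x)
  calc (∑ x, e x)^2 = (∑ x, Real.sqrt (e x / s x) * Real.sqrt (e x * s x))^2 := by
        congr 1
        apply Finset.sum_congr rfl
        intro x _
        rw [← Real.sqrt_mul (div_nonneg (he0 x) (hs0 x).le)]
        have hne := (hs0 x).ne'
        have : e x / s x * (e x * s x) = (e x)^2 := by
          field_simp
        rw [this, Real.sqrt_sq (he0 x)]
    _ ≤ (∑ x, Real.sqrt (e x / s x)^2) * (∑ x, Real.sqrt (e x * s x)^2) := h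
    _ = (∑ x, e x / s x) * (∑ x, e x * s x) := by
        congr 1
        · apply Finset.sum_congr rfl
          intro x _
          rw [Real.sq_sqrt (div_nonneg (he0 x) (hs0 x).le)]
        · apply Finset.sum_congr rfl
          intro x _
          rw [Real.sq_sqrt (mul_nonneg (he0 x) (hs0 x).le)]

lemma div_bound (x N : ℝ) (hN : 0 < N) (hx : x ≤ N^2/4) : (1/8)*x/N ≤ N/16 := by
  rw [div_le_iff₀ hN]; nlinarith

lemma div_bound2 (x N : ℝ) (hN : 0 < N) (hx : x ≤ N^2) : x/(16*N) ≤ N/16 := by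
  rw [div_le_iff₀ (by linarith : (0:ℝ) < 16*N)]; nlinarith

lemma gain_bound (a U S N : ℝ) (hN : 0 < N) (hU : 0 < U) (hS : 0 ≤ S) (hUN : U ≤ N)
    (hSN : S ≤ N) (ha : a ≤ 4*U^2) (ha0 : 0 ≤ a) :
    a/(16*N) ≤ (1/2)*(U^2/(U+S)) := by
  have hUS : (0:ℝ) < U + S := by linarith
  rw [show (1/2)*(U^2/(U+S)) = U^2/(2*(U+S)) from by
    rw [eq_div_iff (by linarith : (2:ℝ)*(U+S) ≠ 0)]
    field_simp
    try ring]
  rw [div_le_div_iff₀ (by linarith : (0:ℝ) < 16*N) (by linarith : (0:ℝ) < 2*(U+S))]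
  nlinarith [mul_le_mul_of_nonneg_right ha (by linarith : (0:ℝ) ≤ 2*(U+S)),
    mul_le_mul_of_nonneg_left (by linarith : U + S ≤ 2*N) (sq_nonneg U)]

/-! ### The main arithmetic assembly step -/

set_option maxHeartbeats 1000000 in
lemma assemble (N t0 t1 f0 f1 S S' U T T' : ℝ)
    (hN : 0 < N)
    (hf0 : f0 = N - t0) (hf1 : f1 = N - t1)
    (ht0 : 0 ≤ t0) (ht0' : t0 ≤ N) (ht1 : 0 ≤ t1) (ht1' : t1 ≤ N)
    (hS : 0 ≤ S) (hS' : 0 ≤ S')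
    (hU0 : 0 ≤ U) (hUN : U ≤ N)
    (hIH : (1/8)*(f0*t0)/N ≤ S) (hIH' : (1/8)*(f1*t1)/N ≤ S')
    (hUa : |t0 - t1| ≤ 2*U)
    (h1 : S ≤ T) (h1' : S' ≤ T')
    (h2 : 0 < U → S + (1/2)*(U^2/(U+S)) ≤ T) :
    (1/8) * ((f0+f1)*(t0+t1)) / (2*N) ≤ T + T' := by
  have hid : (1/8) * ((f0+f1)*(t0+t1)) / (2*N)
      = (1/8)*(f0*t0)/N + (1/8)*(f1*t1)/N + (t0-t1)^2/(16*N) := by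
    subst hf0 hf1; field_simp; ring
  by_cases hc : (1/8)*(f0*t0)/N + (1/8)*(f1*t1)/N + (t0-t1)^2/(16*N) ≤ S + S'
  · linarith
  push_neg at hc
  have hBpos : 0 < (t0-t1)^2/(16*N) := by linarith
  have hsq : 0 < (t0-t1)^2 := by
    by_contra hcon
    push_neg at hcon
    have : (t0-t1)^2 = 0 := le_antisymm hcon (sq_nonneg _)
    rw [this] at hBpos
    norm_num at hBpos
  have hB : (t0 - t1)^2 ≤ 4*U^2 := by
    nlinarith [sq_abs (t0 - t1), abs_nonneg (t0 - t1)]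
  have hUpos : 0 < U := by
    rcases hU0.lt_or_eq with h|h
    · exact h
    · exfalso; rw [← h] at hB; nlinarith
  have hf0t0 : f0*t0 ≤ N^2/4 := by subst hf0; nlinarith [sq_nonneg (N - 2*t0)]
  have hf1t1 : f1*t1 ≤ N^2/4 := by subst hf1; nlinarith [sq_nonneg (N - 2*t1)]
  have htN : (t0-t1)^2 ≤ N^2 := by nlinarith
  have hSS : S + S' < 3*(N/16) := by
    have hA := div_bound (f0*t0) N hN hf0t0
    have hA' := div_bound (f1*t1) N hN hf1t1
    have hBB := div_bound2 ((t0-t1)^2) N hN htN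
    linarith
  have hX : (t0-t1)^2/(16*N) ≤ (1/2)*(U^2/(U+S)) := by
    refine gain_bound _ _ _ _ hN hUpos hS hUN (by linarith) hB (sq_nonneg _)
  have hT := h2 hUpos
  linarith


lemma colInf_cast {d : ℕ} (g : Cube (d+1) → Bool) (ξ : Cube (d+1) → Fin (d+1) → Bool)
    (b : Bool) (x : Cube d) :
    ((cubeColInf g ξ (Fin.cons b x) : ℝ))
      = ((cubeColInf (gres g b) (xires ξ b) x : ℝ)) + ((eb g ξ b x : ℝ)) := by
  rw [colInf_cons]
  push_cast
  ring

lemma half_mono {d : ℕ} (g : Cube (d+1) → Bool) (ξ : Cube (d+1) → Fin (d+1) → Bool)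
    (b : Bool) :
    (∑ x : Cube d, Real.sqrt ((cubeColInf (gres g b) (xires ξ b) x : ℝ)))
      ≤ ∑ x : Cube d, Real.sqrt ((cubeColInf g ξ (Fin.cons b x) : ℝ)) := by
  apply Finset.sum_le_sum
  intro x _
  apply Real.sqrt_le_sqrt
  rw [colInf_cast]
  have : (0:ℝ) ≤ (eb g ξ b x : ℝ) := by positivity
  linarith

lemma half_bound {d : ℕ} (g : Cube (d+1) → Bool) (ξ : Cube (d+1) → Fin (d+1) → Bool)
    (b : Bool) (hU : 0 < ∑ x : Cube d, ((eb g ξ b x : ℝ))) :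
    (∑ x : Cube d, Real.sqrt ((cubeColInf (gres g b) (xires ξ b) x : ℝ)))
      + (1/2) * ((∑ x : Cube d, ((eb g ξ b x : ℝ)))^2 /
        ((∑ x : Cube d, ((eb g ξ b x : ℝ)))
          + ∑ x : Cube d, Real.sqrt ((cubeColInf (gres g b) (xires ξ b) x : ℝ))))
      ≤ ∑ x : Cube d, Real.sqrt ((cubeColInf g ξ (Fin.cons b x) : ℝ)) := by
  set I : Cube d → ℝ := fun x => ((cubeColInf (gres g b) (xires ξ b) x : ℝ)) with hI
  set e : Cube d → ℝ := fun x => ((eb g ξ b x : ℝ)) with he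
  have hI0 : ∀ x, 0 ≤ I x := fun x => by rw [hI]; positivity
  have he01 : ∀ x, e x = 0 ∨ e x = 1 := fun x => eb_zero_or_one g ξ b x
  have he0 : ∀ x, 0 ≤ e x := fun x => by rcases he01 x with h|h <;> simp [h]
  set S : ℝ := ∑ x : Cube d, Real.sqrt (I x) with hS
  set U : ℝ := ∑ x : Cube d, e x with hUdef
  have hS0 : 0 ≤ S := Finset.sum_nonneg fun x _ => Real.sqrt_nonneg _
  -- step 1: pointwise sqrt lower bound
  have step1 : S + (1/2) * (∑ x : Cube d, e x / Real.sqrt (I x + 1))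
      ≤ ∑ x : Cube d, Real.sqrt ((cubeColInf g ξ (Fin.cons b x) : ℝ)) := by
    rw [hS, Finset.mul_sum, ← Finset.sum_add_distrib]
    apply Finset.sum_le_sum
    intro x _
    have h := sqrt_add_ind (I x) (e x) (hI0 x) (he01 x)
    have harg : ((cubeColInf g ξ (Fin.cons b x) : ℝ)) = I x + e x := colInf_cast g ξ b x
    rw [harg]
    have : (1:ℝ)/2 * (e x / Real.sqrt (I x + 1)) = e x / (2 * Real.sqrt (I x + 1)) := by
      ring
    rw [this]
    exact h
  -- step 2: Cauchy-Schwarz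
  have hs1 : ∀ x, (1:ℝ) ≤ Real.sqrt (I x + 1) := by
    intro x
    have := Real.sqrt_le_sqrt (by linarith [hI0 x] : (1:ℝ) ≤ I x + 1)
    rwa [Real.sqrt_one] at this
  have hcs := cs_aux e (fun x => Real.sqrt (I x + 1)) he01 hs1
  have hH : (∑ x : Cube d, e x * Real.sqrt (I x + 1)) ≤ U + S := by
    rw [hUdef, hS, ← Finset.sum_add_distrib]
    apply Finset.sum_le_sum
    intro x _
    rcases he01 x with h|h
    · rw [h]; simpa using Real.sqrt_nonneg (I x)
    · rw [h]; simpa using (by linarith [sqrt_succ_le (I x) (hI0 x)] :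
        Real.sqrt (I x + 1) ≤ 1 + Real.sqrt (I x))
  have hG0 : 0 ≤ ∑ x : Cube d, e x / Real.sqrt (I x + 1) :=
    Finset.sum_nonneg fun x _ => div_nonneg (he0 x) (Real.sqrt_nonneg _)
  have hUS : 0 < U + S := by linarith
  have hkey : U^2 / (U + S) ≤ ∑ x : Cube d, e x / Real.sqrt (I x + 1) := by
    rw [div_le_iff₀ hUS]
    calc U^2 ≤ (∑ x : Cube d, e x / Real.sqrt (I x + 1))
          * (∑ x : Cube d, e x * Real.sqrt (I x + 1)) := hcs
      _ ≤ (∑ x : Cube d, e x / Real.sqrt (I x + 1)) * (U + S) := by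
          apply mul_le_mul_of_nonneg_left hH hG0
  calc S + (1/2) * (U^2 / (U + S)) ≤ S + (1/2) * (∑ x : Cube d, e x / Real.sqrt (I x + 1)) := by
        linarith
    _ ≤ _ := step1

lemma eb_sum_le {d : ℕ} (g : Cube (d+1) → Bool) (ξ : Cube (d+1) → Fin (d+1) → Bool)
    (b : Bool) : (∑ x : Cube d, ((eb g ξ b x : ℝ))) ≤ 2^d := by
  calc (∑ x : Cube d, ((eb g ξ b x : ℝ))) ≤ ∑ _x : Cube d, (1:ℝ) := by
        apply Finset.sum_le_sum
        intro x _
        rcases eb_zero_or_one g ξ b x with h|h <;> rw [h] <;> norm_num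
    _ = 2^d := by
        rw [Finset.sum_const, Finset.card_univ, nsmul_eq_mul, mul_one, card_cube]

lemma main : ∀ (d : ℕ) (g : Cube d → Bool) (ξ : Cube d → Fin d → Bool),
    (1/8 : ℝ) * (cntR g false * cntR g true) / 2 ^ d
      ≤ ∑ z : Cube d, Real.sqrt ((cubeColInf g ξ z : ℝ)) := by
  intro d
  induction d with
  | zero =>
    intro g ξ
    have hprod : cntR g false * cntR g true = 0 := by
      unfold cntR
      rw [Fintype.sum_unique, Fintype.sum_unique]
      cases h : g default <;> simp [h]
    rw [hprod]
    simp only [mul_zero, zero_div]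
    positivity
  | succ d IH =>
    intro g ξ
    have hN : (0:ℝ) < 2^d := by positivity
    set t0 := cntR (gres g false) true with ht0def
    set t1 := cntR (gres g true) true with ht1def
    set f0 := cntR (gres g false) false with hf0def
    set f1 := cntR (gres g true) false with hf1def
    set S0 := ∑ x : Cube d, Real.sqrt ((cubeColInf (gres g false) (xires ξ false) x : ℝ)) with hS0def
    set S1 := ∑ x : Cube d, Real.sqrt ((cubeColInf (gres g true) (xires ξ true) x : ℝ)) with hS1def
    set U0 := ∑ x : Cube d, ((eb g ξ false x : ℝ)) with hU0def
    set U1 := ∑ x : Cube d, ((eb g ξ true x : ℝ)) with hU1def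
    set T0 := ∑ x : Cube d, Real.sqrt ((cubeColInf g ξ (Fin.cons false x) : ℝ)) with hT0def
    set T1 := ∑ x : Cube d, Real.sqrt ((cubeColInf g ξ (Fin.cons true x) : ℝ)) with hT1def
    have hadd0 : f0 + t0 = 2^d := cntR_add (gres g false)
    have hadd1 : f1 + t1 = 2^d := cntR_add (gres g true)
    have ht0 : 0 ≤ t0 := cntR_nonneg _ _
    have ht1 : 0 ≤ t1 := cntR_nonneg _ _
    have hf0 : 0 ≤ f0 := cntR_nonneg _ _
    have hf1 : 0 ≤ f1 := cntR_nonneg _ _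
    have hIH0 : (1/8:ℝ)*(f0*t0)/2^d ≤ S0 := IH (gres g false) (xires ξ false)
    have hIH1 : (1/8:ℝ)*(f1*t1)/2^d ≤ S1 := IH (gres g true) (xires ξ true)
    have hS0 : 0 ≤ S0 := Finset.sum_nonneg fun x _ => Real.sqrt_nonneg _
    have hS1 : 0 ≤ S1 := Finset.sum_nonneg fun x _ => Real.sqrt_nonneg _
    have hU0nn : 0 ≤ U0 := Finset.sum_nonneg fun x _ => by positivity
    have hU1nn : 0 ≤ U1 := Finset.sum_nonneg fun x _ => by positivity
    have hU0N : U0 ≤ 2^d := eb_sum_le g ξ false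
    have hU1N : U1 ≤ 2^d := eb_sum_le g ξ true
    have htU : |t0 - t1| ≤ U0 + U1 := diff_le g ξ
    have h10 : S0 ≤ T0 := half_mono g ξ false
    have h11 : S1 ≤ T1 := half_mono g ξ true
    have h20 : 0 < U0 → S0 + (1/2)*(U0^2/(U0+S0)) ≤ T0 := fun h => half_bound g ξ false h
    have h21 : 0 < U1 → S1 + (1/2)*(U1^2/(U1+S1)) ≤ T1 := fun h => half_bound g ξ true h
    have hsum : (∑ z : Cube (d+1), Real.sqrt ((cubeColInf g ξ z : ℝ))) = T0 + T1 :=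
      sum_cube_succ (fun z => Real.sqrt ((cubeColInf g ξ z : ℝ)))
    rw [hsum, cntR_split g false, cntR_split g true, ← hf0def, ← hf1def, ← ht0def, ← ht1def]
    have hpow : (2:ℝ)^(d+1) = 2*2^d := by ring
    rw [hpow]
    rcases le_total U0 U1 with hcase | hcase
    · have h := assemble (2^d) t1 t0 f1 f0 S1 S0 U1 T1 T0 hN
        (by linarith) (by linarith) ht1 (by linarith) ht0 (by linarith)
        hS1 hS0 hU1nn hU1N hIH1 hIH0
        (by rw [abs_sub_comm]; linarith)
        h11 h10 h21
      calc (1/8:ℝ) * ((f0+f1)*(t0+t1)) / (2*2^d)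
          = (1/8) * ((f1+f0)*(t1+t0)) / (2*2^d) := by ring
        _ ≤ T1 + T0 := h
        _ = T0 + T1 := by ring
    · have h := assemble (2^d) t0 t1 f0 f1 S0 S1 U0 T0 T1 hN
        (by linarith) (by linarith) ht0 (by linarith) ht1 (by linarith)
        hS0 hS1 hU0nn hU0N hIH0 hIH1
        (by linarith)
        h10 h11 h20
      exact h

end ColoredTalagrandAux

open ColoredTalagrandAux in
/-- the colored (robust) undirected Talagrand inequality on the Boolean
hypercube (Khot–Minzer–Safra). -/
theorem colored_talagrand_hypercube :
    ∃ C : ℝ, 0 < C ∧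
      ∀ (d : ℕ), 1 ≤ d →
        ∀ (g : Cube d → Bool) (ξ : Cube d → Fin d → Bool),
          (∑ z : Cube d, Real.sqrt (cubeColInf g ξ z)) / 2 ^ d ≥ C * varCube g := by
  refine ⟨1/8, by norm_num, ?_⟩
  intro d _ g ξ
  have h := main d g ξ
  have hN : (0:ℝ) < 2^d := by positivity
  rw [ge_iff_le, varCube, card_cast, card_cast]
  calc (1/8:ℝ) * (cntR g false / 2^d * (cntR g true / 2^d))
      = ((1/8) * (cntR g false * cntR g true) / 2^d) / 2^d := by ring
    _ ≤ (∑ z : Cube d, Real.sqrt ((cubeColInf g ξ z : ℝ))) / 2^d := by gcongr
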